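/- For q = 1, the function f₁(x) = −(2/3 − x)log₂(2/3 − x) − 2x log₂(2x) − (1/3 − x)log₂(1/3 − x) on (0, 1/3) attains its maximum at x = (√33 − 3)/18. -/

import Mathlib

open scoped BigOperators

/-- A 3-tensor over a field `F`, given by its dimensions and coordinate array. -/
structure Tensor (F : Type) [Field F] where
  n1 : ℕ
  n2 : ℕ
  n3 : ℕ
  val : Fin n1 → Fin n2 → Fin n3 → F

namespace Tensor

variable {F : Type} [Field F]

/-- `Restricts t s` means `t ≥ s`: there are linear maps on the three factors mapping `t` to `s`. -/
def Restricts (t s : Tensor F) : Prop :=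
  ∃ (A1 : Matrix (Fin s.n1) (Fin t.n1) F) (A2 : Matrix (Fin s.n2) (Fin t.n2) F)
    (A3 : Matrix (Fin s.n3) (Fin t.n3) F),
    ∀ a b c, s.val a b c =
      ∑ i, ∑ j, ∑ k, A1 a i * A2 b j * A3 c k * t.val i j k

/-- Kronecker (tensor) product of two 3-tensors. -/
def tmul (t s : Tensor F) : Tensor F :=
  ⟨t.n1 * s.n1, t.n2 * s.n2, t.n3 * s.n3, fun a b c =>
    t.val (finProdFinEquiv.symm a).1 (finProdFinEquiv.symm b).1 (finProdFinEquiv.symm c).1 *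
    s.val (finProdFinEquiv.symm a).2 (finProdFinEquiv.symm b).2 (finProdFinEquiv.symm c).2⟩

/-- The trivial `1×1×1` tensor. -/
def unit : Tensor F := ⟨1, 1, 1, fun _ _ _ => 1⟩

/-- Kronecker power. -/
def tpow (t : Tensor F) : ℕ → Tensor F
  | 0 => unit
  | n + 1 => tmul (tpow t n) t

/-- The rank-`n` diagonal (unit) tensor `⟨n⟩`. -/
def diag (n : ℕ) : Tensor F :=
  ⟨n, n, n, fun i j k => if i = j ∧ j = k then 1 else 0⟩

/-- The matrix multiplication tensor `⟨a,b,c⟩`. -/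
def mm (a b c : ℕ) : Tensor F :=
  ⟨a * b, b * c, c * a, fun x y z =>
    if (finProdFinEquiv.symm x).1 = (finProdFinEquiv.symm z).2 ∧
       (finProdFinEquiv.symm x).2 = (finProdFinEquiv.symm y).1 ∧
       (finProdFinEquiv.symm y).2 = (finProdFinEquiv.symm z).1 then 1 else 0⟩

/-- A tensor is simple if it is of the form `u ⊗ v ⊗ w`. -/
def IsSimple (t : Tensor F) : Prop :=
  ∃ (u : Fin t.n1 → F) (v : Fin t.n2 → F) (w : Fin t.n3 → F),
    ∀ i j k, t.val i j k = u i * v j * w k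

/-- Tensor rank. -/
noncomputable def rank (t : Tensor F) : ℕ := sInf {n | Restricts (diag n) t}

/-- Subrank. -/
noncomputable def subrank (t : Tensor F) : ℕ := sSup {n | Restricts t (diag n)}

/-- Asymptotic rank `Q̃(t) = lim R(t^{⊗n})^{1/n} = inf_n R(t^{⊗n})^{1/n}`. -/
noncomputable def asympRank (t : Tensor F) : ℝ :=
  ⨅ n : ℕ+, (rank (tpow t n) : ℝ) ^ ((n : ℝ)⁻¹)

/-- Asymptotic subrank `Q(t) = lim Q(t^{⊗n})^{1/n} = sup_n Q(t^{⊗n})^{1/n}`. -/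
noncomputable def asympSubrank (t : Tensor F) : ℝ :=
  ⨆ n : ℕ+, (subrank (tpow t n) : ℝ) ^ ((n : ℝ)⁻¹)

/-- `relexpSeq t s n = min { m : t^{⊗m} ≥ s^{⊗n} }`. -/
noncomputable def relexpSeq (t s : Tensor F) (n : ℕ) : ℕ :=
  sInf {m | Restricts (tpow t m) (tpow s n)}

/-- Relative exponent `ω(t,s) = lim_n (1/n) min{m : t^{⊗m} ≥ s^{⊗n}} = sup_n ...`. -/
noncomputable def relexp (t s : Tensor F) : ℝ :=
  ⨆ n : ℕ+, (relexpSeq t s n : ℝ) / (n : ℝ)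

/-- Irreversibility, as the product of relative exponents. -/
noncomputable def irr (t : Tensor F) : ℝ := relexp (diag 2) t * relexp t (diag 2)

/-- Irreversibility, as a ratio of logarithms. -/
noncomputable def irrL (t : Tensor F) : ℝ :=
  Real.logb 2 (asympRank t) / Real.logb 2 (asympSubrank t)

/-- First flattening of a tensor, an `n1 × (n2·n3)` matrix. -/
def flatten1 (t : Tensor F) : Matrix (Fin t.n1) (Fin t.n2 × Fin t.n3) F :=
  fun a p => t.val a p.1 p.2

/-- Second flattening. -/
def flatten2 (t : Tensor F) : Matrix (Fin t.n2) (Fin t.n1 × Fin t.n3) F :=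
  fun b p => t.val p.1 b p.2

/-- Third flattening. -/
def flatten3 (t : Tensor F) : Matrix (Fin t.n3) (Fin t.n1 × Fin t.n2) F :=
  fun c p => t.val p.1 p.2 c

end Tensor

/-- The function `f₁` from the analysis of `CW₁`. -/
noncomputable def fCW1 (x : ℝ) : ℝ :=
  -(2/3 - x) * Real.logb 2 (2/3 - x) - 2 * x * Real.logb 2 (2 * x)
    - (1/3 - x) * Real.logb 2 (1/3 - x)

open Set

lemma fCW1_eq : fCW1 = fun x : ℝ =>
    (-(2/3 - x) * Real.log (2/3 - x) - 2 * x * Real.log (2 * x)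
      - (1/3 - x) * Real.log (1/3 - x)) * (Real.log 2)⁻¹ := by
  funext x
  simp only [fCW1, Real.logb, div_eq_mul_inv]
  ring

lemma fCW1_hasDerivAt {x : ℝ} (hx : x ∈ Ioo (0:ℝ) (1/3)) :
    HasDerivAt fCW1
      ((Real.log (2/3 - x) + Real.log (1/3 - x) - 2 * Real.log (2 * x)) * (Real.log 2)⁻¹) x := by
  obtain ⟨hx0, hx3⟩ := hx
  have h1 : (0:ℝ) < 2/3 - x := by linarith
  have h2 : (0:ℝ) < 1/3 - x := by linarith
  have h3 : (0:ℝ) < 2 * x := by linarith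
  have hu : HasDerivAt (fun x : ℝ => 2/3 - x) (-1) x := by
    exact (hasDerivAt_id' x).const_sub _
  have hv : HasDerivAt (fun x : ℝ => 1/3 - x) (-1) x := by
    exact (hasDerivAt_id' x).const_sub _
  have hw : HasDerivAt (fun x : ℝ => 2 * x) 2 x := by
    simpa using (hasDerivAt_id x).const_mul (2:ℝ)
  have hlu := hu.log h1.ne'
  have hlv := hv.log h2.ne'
  have hlw := hw.log h3.ne'
  have hA : HasDerivAt (fun x : ℝ => -(2/3 - x) * Real.log (2/3 - x))
      (Real.log (2/3 - x) + 1) x := by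
    have := (hu.neg).mul hlu
    refine this.congr_deriv ?_
    have h1' : (2:ℝ) - 3 * x ≠ 0 := by intro h; rw [show (2:ℝ)/3 - x = (2 - 3*x)/3 by ring, h] at h1; norm_num at h1
    simp only [Pi.neg_apply]
    field_simp
  have hB : HasDerivAt (fun x : ℝ => 2 * x * Real.log (2 * x))
      (2 * Real.log (2 * x) + 2) x := by
    have := hw.mul hlw
    refine this.congr_deriv ?_
    field_simp
  have hC : HasDerivAt (fun x : ℝ => (1/3 - x) * Real.log (1/3 - x))
      (-Real.log (1/3 - x) - 1) x := by
    have := hv.mul hlv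
    refine this.congr_deriv ?_
    have h2' : (1:ℝ) - 3 * x ≠ 0 := by intro h; rw [show (1:ℝ)/3 - x = (1 - 3*x)/3 by ring, h] at h2; norm_num at h2
    field_simp
    ring
  rw [fCW1_eq]
  have := ((hA.sub hB).sub hC).mul_const (Real.log 2)⁻¹
  refine this.congr_deriv ?_
  ring

lemma fCW1_deriv {x : ℝ} (hx : x ∈ Ioo (0:ℝ) (1/3)) :
    deriv fCW1 x
      = (Real.log (2/3 - x) + Real.log (1/3 - x) - 2 * Real.log (2 * x)) * (Real.log 2)⁻¹ :=
  (fCW1_hasDerivAt hx).deriv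


open Set in
/-- `f₁` is strictly concave on `(0, 1/3)`, has vanishing derivative
at `x* = (√33 − 3)/18`, and attains its maximum on `(0, 1/3)` there. -/
theorem fCW1_max :
    let xs : ℝ := (Real.sqrt 33 - 3) / 18
    StrictConcaveOn ℝ (Ioo (0:ℝ) (1/3)) fCW1 ∧
    deriv fCW1 xs = 0 ∧
    xs ∈ Ioo (0:ℝ) (1/3) ∧
    IsMaxOn fCW1 (Ioo (0:ℝ) (1/3)) xs := by
  intro xs
  have hs2 : Real.sqrt 33 ^ 2 = 33 := Real.sq_sqrt (by norm_num)
  have hs5 : (5:ℝ) < Real.sqrt 33 := by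
    nlinarith [Real.sqrt_nonneg 33, hs2]
  have hs6 : Real.sqrt 33 < 6 := by
    nlinarith [Real.sqrt_nonneg 33, hs2]
  have hxs : xs ∈ Ioo (0:ℝ) (1/3) := by
    constructor
    · show (0:ℝ) < (Real.sqrt 33 - 3) / 18; linarith
    · show (Real.sqrt 33 - 3) / 18 < 1/3; linarith
  have hlog2 : (0:ℝ) < Real.log 2 := Real.log_pos (by norm_num)
  -- continuity on Ioo
  have hcont : ContinuousOn fCW1 (Ioo (0:ℝ) (1/3)) := fun x hx =>
    (fCW1_hasDerivAt hx).continuousAt.continuousWithinAt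
  -- strict anti deriv
  have hanti : StrictAntiOn (deriv fCW1) (Ioo (0:ℝ) (1/3)) := by
    intro x hx y hy hxy
    rw [fCW1_deriv hx, fCW1_deriv hy]
    obtain ⟨hx0, hx3⟩ := hx
    obtain ⟨hy0, hy3⟩ := hy
    have l1 : Real.log (2/3 - y) < Real.log (2/3 - x) :=
      Real.log_lt_log (by linarith) (by linarith)
    have l2 : Real.log (1/3 - y) < Real.log (1/3 - x) :=
      Real.log_lt_log (by linarith) (by linarith)
    have l3 : Real.log (2 * x) < Real.log (2 * y) :=
      Real.log_lt_log (by linarith) (by linarith)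
    have := inv_pos.mpr hlog2
    nlinarith
  have hconc : StrictConcaveOn ℝ (Ioo (0:ℝ) (1/3)) fCW1 := by
    apply StrictAntiOn.strictConcaveOn_of_deriv (convex_Ioo _ _) hcont
    rwa [interior_Ioo]
  have hd0 : deriv fCW1 xs = 0 := by
    rw [fCW1_deriv hxs]
    have h1 : (0:ℝ) < 2/3 - xs := by linarith [hxs.2]
    have h2 : (0:ℝ) < 1/3 - xs := by linarith [hxs.2]
    have h3 : (0:ℝ) < 2 * xs := by linarith [hxs.1]
    have key : (2/3 - xs) * (1/3 - xs) = (2 * xs) ^ 2 := by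
      show (2/3 - (Real.sqrt 33 - 3) / 18) * (1/3 - (Real.sqrt 33 - 3) / 18)
          = (2 * ((Real.sqrt 33 - 3) / 18)) ^ 2
      nlinarith [hs2]
    have : Real.log (2/3 - xs) + Real.log (1/3 - xs) = 2 * Real.log (2 * xs) := by
      rw [← Real.log_mul h1.ne' h2.ne', key, Real.log_pow]
      push_cast; ring
    rw [this]; ring
  refine ⟨hconc, hd0, hxs, ?_⟩
  -- max via monotonicity on both sides
  have hmono : StrictMonoOn fCW1 (Ioc (0:ℝ) xs) := by
    apply strictMonoOn_of_deriv_pos (convex_Ioc _ _)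
    · exact hcont.mono (fun z hz => ⟨hz.1, lt_of_le_of_lt hz.2 hxs.2⟩)
    · intro x hx
      rw [interior_Ioc] at hx
      have hx' : x ∈ Ioo (0:ℝ) (1/3) := ⟨hx.1, hx.2.trans hxs.2⟩
      rw [fCW1_deriv hx']
      obtain ⟨hx0, hx3⟩ := hx'
      have h1 : (0:ℝ) < 2/3 - x := by linarith
      have h2 : (0:ℝ) < 1/3 - x := by linarith
      have h3 : (0:ℝ) < 2 * x := by linarith
      have key : (2 * x) ^ 2 < (2/3 - x) * (1/3 - x) := by
        have hxlt : x < (Real.sqrt 33 - 3) / 18 := hx.2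
        nlinarith [hs2, hs5]
      have h4 := Real.log_lt_log (show (0:ℝ) < (2*x)^2 by positivity) key
      rw [Real.log_pow, Real.log_mul h1.ne' h2.ne'] at h4
      push_cast at h4
      have : 0 < Real.log (2/3 - x) + Real.log (1/3 - x) - 2 * Real.log (2 * x) := by linarith
      exact mul_pos this (inv_pos.mpr hlog2)
  have hanti2 : StrictAntiOn fCW1 (Ico xs (1/3)) := by
    apply strictAntiOn_of_deriv_neg (convex_Ico _ _)
    · exact hcont.mono (fun z hz => ⟨lt_of_lt_of_le hxs.1 hz.1, hz.2⟩)
    · intro x hx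
      rw [interior_Ico] at hx
      have hx' : x ∈ Ioo (0:ℝ) (1/3) := ⟨hxs.1.trans hx.1, hx.2⟩
      rw [fCW1_deriv hx']
      obtain ⟨hx0, hx3⟩ := hx'
      have h1 : (0:ℝ) < 2/3 - x := by linarith
      have h2 : (0:ℝ) < 1/3 - x := by linarith
      have h3 : (0:ℝ) < 2 * x := by linarith
      have key : (2/3 - x) * (1/3 - x) < (2 * x) ^ 2 := by
        have hxlt : (Real.sqrt 33 - 3) / 18 < x := hx.1
        nlinarith [hs2, hs5]
      have h4 := Real.log_lt_log (mul_pos h1 h2) key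
      rw [Real.log_pow, Real.log_mul h1.ne' h2.ne'] at h4
      push_cast at h4
      have : Real.log (2/3 - x) + Real.log (1/3 - x) - 2 * Real.log (2 * x) < 0 := by linarith
      exact mul_neg_of_neg_of_pos this (inv_pos.mpr hlog2)
  intro y hy
  simp only [Set.mem_setOf_eq]
  rcases le_or_gt y xs with h | h
  · rcases eq_or_lt_of_le h with rfl | hlt
    · exact le_refl _
    · exact (hmono ⟨hy.1, hlt.le⟩ ⟨hxs.1, le_refl _⟩ hlt).le
  · exact (hanti2 ⟨le_refl _, hxs.2⟩ ⟨h.le, hy.2⟩ h).le
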